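/- Let α ∈ R_+, j > 0, and α̃ = [α, ν_α j] ∈ R̃_+; fix ⋄ ∈ {sht,lng}. Then λ_{ν_⋄}(s_α̃) is the union of the following three sets: (a) {[α, ν_α k] : 0 ≤ k ≤ 2j} if ν_α = ν_⋄, and the empty set otherwise; (b) all β̃ = [β, ν_β k] ∈ R̃_+ with β ∈ R, β ≠ α, ν_β = ν_⋄, (α,β) > 0 and 0 ≤ ν_β k < (α,β)j; (c) all [β, (α,β)j] with β ∈ R, β ≠ α, ν_β = ν_⋄, (α,β) > 0 such that β ∈ R_− or β ∈ λ(s_α). Consequently l_⋄(s_α̃) = l_⋄(jα) + l_⋄(s_α), where jα = s_α s_α̃ ∈ Ŵ is the translation by the weight jα. -/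

import Mathlib

open scoped RealInnerProductSpace Classical

noncomputable section

/-- Euclidean space ℝⁿ. -/
abbrev EV (n : ℕ) := EuclideanSpace ℝ (Fin n)

/-- ν_α = (α,α)/2. -/
def nuu {n : ℕ} (α : EV n) : ℝ := ⟪α, α⟫ / 2

/-- α^∨ = 2α/(α,α). -/
def coroot {n : ℕ} (α : EV n) : EV n := (2 / ⟪α, α⟫) • α

/-- the reflection s_α. -/
def srefl {n : ℕ} (α : EV n) : EV n → EV n :=
  fun z => z - (2 * ⟪z, α⟫ / ⟪α, α⟫) • α

/-- the affine reflection s_ã attached to ã = [α, ν_α j], acting linearly on ℝⁿ × ℝ. -/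
def aRefl {n : ℕ} (p : EV n × ℝ) : EV n × ℝ → EV n × ℝ :=
  fun z => z - (2 * ⟪z.1, p.1⟫ / ⟪p.1, p.1⟫) • p

/-- the translation element b' ∈ Ŵ, b'([z,ζ]) = [z, ζ − (z,b)]. -/
def transl {n : ℕ} (b : EV n) : EV n × ℝ → EV n × ℝ :=
  fun z => (z.1, z.2 - ⟪z.1, b⟫)

/-- extension of a nonaffine transformation to ℝⁿ × ℝ. -/
def affExt {n : ℕ} (w : EV n → EV n) : EV n × ℝ → EV n × ℝ :=
  fun z => (w z.1, z.2)

/-- An irreducible reduced crystallographic root system in ℝⁿ, with a fixed system of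
positive/simple roots, normalized so that (α,α) = 2 for short roots; `hishort` is the
highest short root ϑ and `hiroot` the highest root θ. -/
structure RootCtx (n : ℕ) where
  R : Finset (EV n)
  pos : Finset (EV n)
  simple : Fin n → EV n
  hishort : EV n
  hiroot : EV n
  nonzero : ∀ α ∈ R, α ≠ (0 : EV n)
  neg_mem : ∀ α ∈ R, -α ∈ R
  reduced : ∀ α ∈ R, ∀ t : ℝ, t • α ∈ R → t = 1 ∨ t = -1
  crys : ∀ α ∈ R, ∀ β ∈ R, ∃ m : ℤ, 2 * ⟪β, α⟫ / ⟪α, α⟫ = (m : ℝ)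
  reflect_mem : ∀ α ∈ R, ∀ β ∈ R, β - (2 * ⟪β, α⟫ / ⟪α, α⟫) • α ∈ R
  span_top : Submodule.span ℝ (R : Set (EV n)) = ⊤
  pos_subset : pos ⊆ R
  pos_iff : ∀ α ∈ R, (α ∈ pos ↔ -α ∉ pos)
  simple_pos : ∀ i, simple i ∈ pos
  simple_inj : Function.Injective simple
  pos_sum : ∀ α ∈ pos, ∃ f : Fin n → ℕ, α = ∑ i, (f i : ℝ) • simple i
  irred : ∀ S : Finset (EV n), S ⊆ R → S.Nonempty →
      (∀ α ∈ S, ∀ β ∈ R, β ∉ S → ⟪α, β⟫ = 0) → S = R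
  normalized : ∀ α ∈ R, (∀ β ∈ R, ⟪α, α⟫ ≤ ⟪β, β⟫) → ⟪α, α⟫ = 2
  hishort_pos : hishort ∈ pos
  hishort_short : ⟪hishort, hishort⟫ = 2
  hishort_high : ∀ α ∈ R, ⟪α, α⟫ = 2 →
      ∃ f : Fin n → ℕ, hishort - α = ∑ i, (f i : ℝ) • simple i
  hiroot_pos : hiroot ∈ pos
  hiroot_high : ∀ α ∈ R, ∃ f : Fin n → ℕ, hiroot - α = ∑ i, (f i : ℝ) • simple i

namespace RootCtx

variable {n : ℕ} (c : RootCtx n)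

/-- word in the simple reflections of W; the letters are listed in the order of
application (the first letter of the list acts first), so `[i₁, …, i_l]`
represents s_{i_l} ⋯ s_{i_1}. -/
def wWord (L : List (Fin n)) : EV n → EV n :=
  L.foldl (fun f i => srefl (c.simple i) ∘ f) id

/-- membership in the Weyl group W. -/
def IsWeyl (w : EV n → EV n) : Prop := ∃ L : List (Fin n), w = c.wWord L

/-- λ(w) = {α ∈ R₊ : w(α) ∈ R₋}. -/
def lamW (w : EV n → EV n) : Finset (EV n) :=
  c.pos.filter (fun α => -(w α) ∈ c.pos)

/-- λ_ν(w). -/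
def lamWnu (w : EV n → EV n) (ν : ℝ) : Finset (EV n) :=
  (c.lamW w).filter (fun α => nuu α = ν)

/-- the length l(w) = |λ(w)| of w ∈ W. -/
def lenW (w : EV n → EV n) : ℕ := (c.lamW w).card

/-- ρ_ν = (1/2) Σ_{α ∈ R₊, ν_α = ν} α. -/
def rho (ν : ℝ) : EV n :=
  (1 / 2 : ℝ) • ∑ α ∈ c.pos.filter (fun α => nuu α = ν), α

/-- ρ_ν^∨ = ρ_ν / ν. -/
def rhoCheck (ν : ℝ) : EV n := ν⁻¹ • c.rho ν

/-- the affine root system R̃ ⊂ ℝⁿ × ℝ. -/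
def aR : Set (EV n × ℝ) := {p | ∃ α ∈ c.R, ∃ j : ℤ, p = (α, nuu α * j)}

/-- positive affine roots. -/
def aPos : Set (EV n × ℝ) :=
  {p | p ∈ c.aR ∧ (0 < p.2 ∨ (p.2 = 0 ∧ p.1 ∈ c.pos))}

/-- negative affine roots. -/
def aNeg : Set (EV n × ℝ) := {p | -p ∈ c.aPos}

/-- the affine simple roots α_0, α_1, …, α_n; the index 0 corresponds to
α₀ = [−ϑ, 1]. -/
def asimple : Fin (n + 1) → EV n × ℝ :=
  fun i => if h : i = 0 then (-c.hishort, (1 : ℝ)) else (c.simple (i.pred h), (0 : ℝ))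

/-- the affine simple reflections s_0, s_1, …, s_n. -/
def aS (i : Fin (n + 1)) : EV n × ℝ → EV n × ℝ := aRefl (c.asimple i)

/-- word in the affine simple reflections (letters in order of application). -/
def affWord (L : List (Fin (n + 1))) : EV n × ℝ → EV n × ℝ :=
  L.foldl (fun f i => c.aS i ∘ f) id

/-- the weight lattice P. -/
def PwSet : Set (EV n) :=
  {b | ∀ i, ∃ m : ℤ, 2 * ⟪b, c.simple i⟫ / ⟪c.simple i, c.simple i⟫ = (m : ℝ)}

/-- the dominant weights P₊. -/
def PplusSet : Set (EV n) :=
  {b | b ∈ c.PwSet ∧ ∀ i, 0 ≤ ⟪b, c.simple i⟫}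

/-- membership in the extended affine Weyl group Ŵ = W ⋉ P,
via the normal form w·b' with w ∈ W and b ∈ P. -/
def IsExtW (f : EV n × ℝ → EV n × ℝ) : Prop :=
  ∃ w b, c.IsWeyl w ∧ b ∈ c.PwSet ∧ f = affExt w ∘ transl b

/-- membership in Π = {π ∈ Ŵ : π(R̃₊) = R̃₊}. -/
def IsPi (f : EV n × ℝ → EV n × ℝ) : Prop :=
  c.IsExtW f ∧ f '' c.aPos = c.aPos

/-- the λ-set λ(ŵ) = R̃₊ ∩ ŵ⁻¹(R̃₋) of an affine transformation. -/
def aLam (f : EV n × ℝ → EV n × ℝ) : Set (EV n × ℝ) :=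
  {p | p ∈ c.aPos ∧ f p ∈ c.aNeg}

/-- the ν-part λ_ν(ŵ). -/
def aLamNu (f : EV n × ℝ → EV n × ℝ) (ν : ℝ) : Set (EV n × ℝ) :=
  {p | p ∈ c.aLam f ∧ nuu p.1 = ν}

/-- the length l(ŵ) = |λ(ŵ)|. -/
def aLen (f : EV n × ℝ → EV n × ℝ) : ℕ := (c.aLam f).ncard

/-- `(π, L)` is a reduced decomposition ŵ = π_r s_{i_l} ⋯ s_{i_1}: π ∈ Π and
the word length is minimal among all such presentations of the same element. -/
def IsReducedA (π : EV n × ℝ → EV n × ℝ) (L : List (Fin (n + 1))) : Prop :=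
  c.IsPi π ∧
    ∀ (π' : EV n × ℝ → EV n × ℝ) (L' : List (Fin (n + 1))),
      c.IsPi π' → π' ∘ c.affWord L' = π ∘ c.affWord L → L.length ≤ L'.length

/-- the λ-sequence α̃¹, α̃², … of a word (0-based indexing):
α̃^{k+1} = s_{i_1} s_{i_2} ⋯ s_{i_k}(α_{i_{k+1}}). -/
def lamSeq (L : List (Fin (n + 1))) (k : Fin L.length) : EV n × ℝ :=
  ((L.take k).foldr (fun i f => c.aS i ∘ f) id) (c.asimple (L.get k))

/-- the λ-sequence of a word in W (0-based indexing). -/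
def lamSeqW (L : List (Fin n)) (k : Fin L.length) : EV n :=
  ((L.take k).foldr (fun i f => srefl (c.simple i) ∘ f) id) (c.simple (L.get k))

end RootCtx


section Helpers

variable {n : ℕ}

lemma inner_self_pos_of_mem (c : RootCtx n) {β : EV n} (hβ : β ∈ c.R) :
    0 < ⟪β, β⟫ :=
  lt_of_not_ge fun h => c.nonzero β hβ (real_inner_self_nonpos.mp h)

lemma nuu_pos (c : RootCtx n) {β : EV n} (hβ : β ∈ c.R) : 0 < nuu β := by
  have := inner_self_pos_of_mem c hβ; unfold nuu; linarith

lemma one_le_nuu (c : RootCtx n) {β : EV n} (hβ : β ∈ c.R) : 1 ≤ nuu β := by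
  obtain ⟨β₀, hβ₀, hmin⟩ := c.R.exists_min_image (fun γ => ⟪γ, γ⟫) ⟨β, hβ⟩
  have h2 : ⟪β₀, β₀⟫ = 2 := c.normalized β₀ hβ₀ hmin
  have := hmin β hβ
  unfold nuu; linarith

lemma nuu_neg (β : EV n) : nuu (-β) = nuu β := by
  unfold nuu; rw [inner_neg_neg]

/-- ⟪β,α⟫ is an integer multiple of ν_α. -/
lemma inner_eq_nuu_int (c : RootCtx n) {α β : EV n} (hα : α ∈ c.R) (hβ : β ∈ c.R) :
    ∃ m : ℤ, ⟪β, α⟫ = nuu α * m := by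
  obtain ⟨m, hm⟩ := c.crys α hα β hβ
  have h0 : (0:ℝ) < ⟪α, α⟫ := inner_self_pos_of_mem c hα
  refine ⟨m, ?_⟩
  rw [div_eq_iff h0.ne'] at hm
  unfold nuu
  linarith

lemma srefl_mem (c : RootCtx n) {α β : EV n} (hα : α ∈ c.R) (hβ : β ∈ c.R) :
    srefl α β ∈ c.R := c.reflect_mem α hα β hβ

private lemma quad_aux (a b x : ℝ) (ha : a ≠ 0) :
    x - 2 * b / a * b - 2 * b / a * b + 2 * b / a * (2 * b / a * a) = x := by
  field_simp
  ring

lemma inner_srefl_self {α : EV n} (hα : ⟪α, α⟫ ≠ 0) (β : EV n) :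
    ⟪srefl α β, srefl α β⟫ = ⟪β, β⟫ := by
  unfold srefl
  rw [inner_sub_sub_self, real_inner_smul_left, real_inner_smul_right,
    real_inner_smul_left, real_inner_smul_right, real_inner_comm α β]
  exact quad_aux _ _ _ hα

lemma nuu_srefl {α : EV n} (hα : ⟪α, α⟫ ≠ 0) (β : EV n) :
    nuu (srefl α β) = nuu β := by
  unfold nuu; rw [inner_srefl_self hα]

lemma srefl_self {α : EV n} (hα : ⟪α, α⟫ ≠ 0) : srefl α α = -α := by
  unfold srefl
  rw [mul_div_assoc, div_self hα, mul_one, two_smul]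
  abel

lemma srefl_zero_of_inner {α β : EV n} (h : ⟪β, α⟫ = 0) : srefl α β = β := by
  unfold srefl; rw [h]; simp

lemma neg_srefl (α β : EV n) : -(srefl α β) = -β - (2 * ⟪-β, α⟫ / ⟪α, α⟫) • α := by
  unfold srefl
  rw [inner_neg_left, mul_neg, neg_div, neg_smul]
  abel

/-- The simple roots are linearly independent. -/
lemma simple_linIndep (c : RootCtx n) : LinearIndependent ℝ c.simple := by
  have hspan : ⊤ ≤ Submodule.span ℝ (Set.range c.simple) := by
    rw [← c.span_top]
    refine Submodule.span_le.mpr ?_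
    intro γ hγ
    have hsum : ∀ δ ∈ c.pos, δ ∈ Submodule.span ℝ (Set.range c.simple) := by
      intro δ hδ
      obtain ⟨f, hf⟩ := c.pos_sum δ hδ
      rw [hf]
      exact Submodule.sum_mem _ fun i _ =>
        Submodule.smul_mem _ _ (Submodule.subset_span ⟨i, rfl⟩)
    rcases (c.pos_iff γ hγ).symm.mpr with _
    by_cases h : γ ∈ c.pos
    · exact hsum γ h
    · have : -γ ∈ c.pos := by
        by_contra h'
        exact h (((c.pos_iff γ hγ)).mpr h')
      have := hsum (-γ) this
      simpa using Submodule.neg_mem _ this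
  exact linearIndependent_of_top_le_span_of_card_eq_finrank hspan
    (by simp [finrank_euclideanSpace_fin])

/-- A root which is a nonnegative integer combination of simple roots is positive. -/
lemma natCombo_pos (c : RootCtx n) {δ : EV n} (hδ : δ ∈ c.R)
    (f : Fin n → ℕ) (hf : δ = ∑ i, (f i : ℝ) • c.simple i) : δ ∈ c.pos := by
  by_contra hpos
  have hneg : -δ ∈ c.pos := by
    by_contra h'
    exact hpos ((c.pos_iff δ hδ).mpr h')
  obtain ⟨g, hg⟩ := c.pos_sum (-δ) hneg
  have hzero : ∑ i, ((f i + g i : ℕ) : ℝ) • c.simple i = 0 := by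
    push_cast
    simp only [add_smul]
    rw [Finset.sum_add_distrib]
    rw [← hf, ← hg]
    abel
  have := Fintype.linearIndependent_iff.mp (simple_linIndep c)
    (fun i => ((f i + g i : ℕ) : ℝ)) hzero
  have hf0 : ∀ i, f i = 0 := by
    intro i
    have := this i
    have : ((f i + g i : ℕ) : ℝ) = 0 := this
    have : f i + g i = 0 := by exact_mod_cast this
    omega
  apply c.nonzero δ hδ
  rw [hf]
  apply Finset.sum_eq_zero
  intro i _
  rw [hf0 i]
  simp

/-- positive root plus a positive natural multiple of a positive root, if a root, is positive. -/
lemma pos_add_nsmul (c : RootCtx n) {β α : EV n} (hβ : β ∈ c.pos) (hα : α ∈ c.pos)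
    (m : ℕ) (hmem : β + (m : ℝ) • α ∈ c.R) : β + (m : ℝ) • α ∈ c.pos := by
  obtain ⟨f, hf⟩ := c.pos_sum β hβ
  obtain ⟨g, hg⟩ := c.pos_sum α hα
  refine natCombo_pos c hmem (fun i => f i + m * g i) ?_
  push_cast
  simp only [add_smul, mul_smul]
  rw [Finset.sum_add_distrib, ← hf, ← Finset.smul_sum, ← hg]

end Helpers
section Helpers2

variable {n : ℕ}

/-- If β∈R, ⟪β,α⟫ ≤ 0 with α∈pos and β∈pos, then s_α(β) ∈ pos. -/
lemma srefl_pos_of_inner_nonpos (c : RootCtx n) {α β : EV n} (hα : α ∈ c.pos)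
    (hβ : β ∈ c.pos) (h : ⟪β, α⟫ ≤ 0) : srefl α β ∈ c.pos := by
  have hαR := c.pos_subset hα
  have hβR := c.pos_subset hβ
  have hαα : (0:ℝ) < ⟪α, α⟫ := inner_self_pos_of_mem c hαR
  obtain ⟨m, hm⟩ := c.crys α hαR β hβR
  have hm' : (m : ℝ) ≤ 0 := by
    rw [← hm]
    apply div_nonpos_of_nonpos_of_nonneg <;> nlinarith
  have hm0 : m ≤ 0 := by exact_mod_cast hm'
  obtain ⟨k, hk⟩ : ∃ k : ℕ, m = -(k : ℤ) := ⟨m.natAbs, by omega⟩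
  have heq : srefl α β = β + (k : ℝ) • α := by
    unfold srefl
    rw [hm, hk]
    push_cast
    rw [neg_smul]
    abel
  rw [heq]
  exact pos_add_nsmul c hβ hα k (by rw [← heq]; exact srefl_mem c hαR hβR)

/-- roots in λ(s_α) pair positively with α. -/
lemma lamW_inner_pos (c : RootCtx n) {α β : EV n} (hα : α ∈ c.pos)
    (hβ : β ∈ c.lamW (srefl α)) : 0 < ⟪α, β⟫ := by
  rw [RootCtx.lamW, Finset.mem_filter] at hβ
  obtain ⟨hβp, hβn⟩ := hβ
  by_contra h
  push_neg at h
  rw [real_inner_comm] at h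
  have hpos := srefl_pos_of_inner_nonpos c hα hβp h
  have hsR : srefl α β ∈ c.R := srefl_mem c (c.pos_subset hα) (c.pos_subset hβp)
  exact ((c.pos_iff _ hsR).mp hpos) hβn

/-- If β ∈ R₋ pairs positively with α ∈ pos then s_α(β) ∈ R₋. -/
lemma neg_srefl_pos (c : RootCtx n) {α β : EV n} (hα : α ∈ c.pos)
    (hβR : β ∈ c.R) (hβ : β ∉ c.pos) (h : 0 < ⟪α, β⟫) : -(srefl α β) ∈ c.pos := by
  have hnegβ : -β ∈ c.pos := by
    by_contra h'
    exact hβ ((c.pos_iff β hβR).mpr h')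
  rw [neg_srefl]
  have : ⟪-β, α⟫ ≤ 0 := by
    rw [inner_neg_left, real_inner_comm]
    linarith
  exact srefl_pos_of_inner_nonpos c hα hnegβ this

private lemma aux2 (a b t x : ℝ) (ha : a ≠ 0) :
    x - 2 * b / a * (a / 2 * t) = x - b * t := by
  field_simp

/-- Computation of the affine reflection. -/
lemma aRefl_eval {α : EV n} (hα : ⟪α, α⟫ ≠ 0) (t : ℝ) (z : EV n × ℝ) :
    aRefl (α, nuu α * t) z = (srefl α z.1, z.2 - ⟪z.1, α⟫ * t) := by
  unfold aRefl srefl nuu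
  ext
  · simp [Prod.smul_def]
  · show z.2 - 2 * ⟪z.1, α⟫ / ⟪α, α⟫ * (⟪α, α⟫ / 2 * t) = z.2 - ⟪z.1, α⟫ * t
    exact aux2 _ _ _ _ hα

end Helpers2
section Helpers3

variable {n : ℕ}

lemma mem_aLamNu_refl_iff (c : RootCtx n) {α : EV n} (hα : α ∈ c.R) (j : ℤ) (ν : ℝ)
    (p : EV n × ℝ) :
    p ∈ c.aLamNu (aRefl (α, nuu α * j)) ν ↔
      ∃ β ∈ c.R, ∃ k : ℤ, p = (β, nuu β * k) ∧ nuu β = ν ∧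
        (0 < nuu β * k ∨ (nuu β * k = 0 ∧ β ∈ c.pos)) ∧
        (nuu β * k - ⟪β, α⟫ * j < 0 ∨
          (nuu β * k - ⟪β, α⟫ * j = 0 ∧ -(srefl α β) ∈ c.pos)) := by
  have hαα : ⟪α, α⟫ ≠ 0 := (inner_self_pos_of_mem c hα).ne'
  simp only [RootCtx.aLamNu, RootCtx.aLam, RootCtx.aPos, RootCtx.aNeg, RootCtx.aR,
    Set.mem_setOf_eq]
  constructor
  · rintro ⟨⟨⟨⟨β, hβR, k, rfl⟩, hpos⟩, hneg⟩, hν⟩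
    rw [aRefl_eval hαα] at hneg
    obtain ⟨-, hcond⟩ := hneg
    simp only [Prod.fst_neg, Prod.snd_neg] at hcond
    refine ⟨β, hβR, k, rfl, hν, hpos, ?_⟩
    rcases hcond with h | ⟨h1, h2⟩
    · left; linarith
    · right; exact ⟨by linarith, h2⟩
  · rintro ⟨β, hβR, k, rfl, hν, hpos, hcond⟩
    obtain ⟨m, hm⟩ := inner_eq_nuu_int c hβR hα
    rw [real_inner_comm] at hm
    have hsR : -(srefl α β) ∈ c.R := c.neg_mem _ (srefl_mem c hα hβR)
    refine ⟨⟨⟨⟨β, hβR, k, rfl⟩, hpos⟩, ?_⟩, hν⟩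
    rw [aRefl_eval hαα]
    have h2 : nuu (-(srefl α β)) = nuu β := by rw [nuu_neg, nuu_srefl hαα]
    refine ⟨⟨-(srefl α β), hsR, m * j - k, ?_⟩, ?_⟩
    · refine Prod.ext rfl ?_
      simp only [Prod.fst_neg, Prod.snd_neg]
      rw [h2, hm]
      push_cast
      ring
    · simp only [Prod.fst_neg, Prod.snd_neg]
      rcases hcond with h | ⟨h1, hp⟩
      · left; linarith
      · right; exact ⟨by linarith, hp⟩

lemma mem_aLamNu_transl_iff (c : RootCtx n) {α : EV n} (hα : α ∈ c.R) (j : ℤ) (ν : ℝ)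
    (p : EV n × ℝ) :
    p ∈ c.aLamNu (transl ((j : ℝ) • α)) ν ↔
      ∃ β ∈ c.R, ∃ k : ℤ, p = (β, nuu β * k) ∧ nuu β = ν ∧
        (0 < nuu β * k ∨ (nuu β * k = 0 ∧ β ∈ c.pos)) ∧
        (nuu β * k - ⟪β, α⟫ * j < 0 ∨
          (nuu β * k - ⟪β, α⟫ * j = 0 ∧ -β ∈ c.pos)) := by
  simp only [RootCtx.aLamNu, RootCtx.aLam, RootCtx.aPos, RootCtx.aNeg, RootCtx.aR,
    Set.mem_setOf_eq]
  have htr : ∀ β : EV n, ∀ t : ℝ, transl ((j : ℝ) • α) (β, t) = (β, t - ⟪β, α⟫ * j) := by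
    intro β t
    unfold transl
    rw [real_inner_smul_right]
    ring_nf
  constructor
  · rintro ⟨⟨⟨⟨β, hβR, k, rfl⟩, hpos⟩, hneg⟩, hν⟩
    rw [htr] at hneg
    obtain ⟨-, hcond⟩ := hneg
    simp only [Prod.fst_neg, Prod.snd_neg] at hcond
    refine ⟨β, hβR, k, rfl, hν, hpos, ?_⟩
    rcases hcond with h | ⟨h1, h2⟩
    · left; linarith
    · right; exact ⟨by linarith, h2⟩
  · rintro ⟨β, hβR, k, rfl, hν, hpos, hcond⟩
    obtain ⟨m, hm⟩ := inner_eq_nuu_int c hβR hα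
    rw [real_inner_comm] at hm
    refine ⟨⟨⟨⟨β, hβR, k, rfl⟩, hpos⟩, ?_⟩, hν⟩
    rw [htr]
    refine ⟨⟨-β, c.neg_mem β hβR, m * j - k, ?_⟩, ?_⟩
    · refine Prod.ext rfl ?_
      simp only [Prod.fst_neg, Prod.snd_neg]
      rw [nuu_neg, hm]
      push_cast
      ring
    · simp only [Prod.fst_neg, Prod.snd_neg]
      rcases hcond with h | ⟨h1, hp⟩
      · left; linarith
      · right; exact ⟨by linarith, hp⟩

end Helpers3
open RootCtx in
/-- Lemma 1.3 (ii).  For α ∈ R₊, j > 0 and α̃ = [α, ν_α j] ∈ R̃₊,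
the set λ_{ν_⋄}(s_α̃) is given explicitly by the union of three sets, and
consequently l_⋄(s_α̃) = l_⋄(jα) + l_⋄(s_α). -/
theorem aLam_posroot_reflection {n : ℕ} (c : RootCtx n)
    (α : EV n) (hα : α ∈ c.pos) (j : ℤ) (hj : 0 < j)
    (ν : ℝ) (hν : ∃ γ ∈ c.R, nuu γ = ν) :
    c.aLamNu (aRefl (α, nuu α * j)) ν =
      ({p : EV n × ℝ | nuu α = ν ∧ ∃ k : ℤ, 0 ≤ k ∧ k ≤ 2 * j ∧ p = (α, nuu α * k)} ∪
       {p : EV n × ℝ | p ∈ c.aPos ∧ p.1 ∈ c.R ∧ p.1 ≠ α ∧ nuu p.1 = ν ∧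
          0 < ⟪α, p.1⟫ ∧ 0 ≤ p.2 ∧ p.2 < ⟪α, p.1⟫ * j} ∪
       {p : EV n × ℝ | ∃ β ∈ c.R, β ≠ α ∧ nuu β = ν ∧ 0 < ⟪α, β⟫ ∧
          (β ∉ c.pos ∨ β ∈ c.lamW (srefl α)) ∧ p = (β, ⟪α, β⟫ * j)}) ∧
    (c.aLamNu (aRefl (α, nuu α * j)) ν).ncard
      = (c.aLamNu (transl ((j : ℝ) • α)) ν).ncard + (c.lamWnu (srefl α) ν).card := by
  have hαR : α ∈ c.R := c.pos_subset hα
  have hαα : (0:ℝ) < ⟪α, α⟫ := inner_self_pos_of_mem c hαR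
  have hν0 : 0 < nuu α := nuu_pos c hαR
  have hαα2 : ⟪α, α⟫ = 2 * nuu α := by unfold nuu; ring
  have hjR : (0:ℝ) < (j:ℝ) := by exact_mod_cast hj
  constructor
  · ext p
    rw [mem_aLamNu_refl_iff c hαR j ν p]
    simp only [Set.mem_union, Set.mem_setOf_eq]
    constructor
    · rintro ⟨β, hβR, k, rfl, hν', hpos, hcond⟩
      by_cases hβα : β = α
      · subst hβα
        left; left
        refine ⟨hν', k, ?_, ?_, rfl⟩
        · -- 0 ≤ k
          have hk : (0:ℝ) ≤ nuu β * k := by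
            rcases hpos with h | ⟨h, -⟩
            · exact le_of_lt h
            · exact le_of_eq h.symm
          have hν0' : 0 < nuu β := nuu_pos c hβR
          have : (0:ℝ) ≤ (k:ℝ) := nonneg_of_mul_nonneg_right hk hν0'
          exact_mod_cast this
        · -- k ≤ 2j
          have hk : nuu β * k - ⟪β, β⟫ * j ≤ 0 := by
            rcases hcond with h | ⟨h, -⟩
            · exact le_of_lt h
            · exact le_of_eq h
          have hββ2 : ⟪β, β⟫ = 2 * nuu β := by unfold nuu; ring
          have hν0' : 0 < nuu β := nuu_pos c hβR
          have : (k:ℝ) ≤ 2 * j := by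
            rw [hββ2] at hk
            nlinarith
          exact_mod_cast this
      · -- β ≠ α: first show 0 < ⟪α, β⟫
        have hk0 : (0:ℝ) ≤ nuu β * k := by
          rcases hpos with h | ⟨h, -⟩
          · exact le_of_lt h
          · exact le_of_eq h.symm
        have hip : 0 < ⟪α, β⟫ := by
          by_contra hip
          push_neg at hip
          rw [real_inner_comm] at hip
          have hβαj : ⟪β, α⟫ * j ≤ 0 := mul_nonpos_of_nonpos_of_nonneg hip hjR.le
          rcases hcond with h | ⟨h, hs⟩
          · linarith
          · -- nuu β * k = ⟪β,α⟫ * j, both sides 0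
            have h1 : nuu β * k = 0 := by linarith
            have h2 : ⟪β, α⟫ * j = 0 := by linarith
            have h3 : ⟪β, α⟫ = 0 := by
              rcases mul_eq_zero.mp h2 with h' | h'
              · exact h'
              · exact absurd h' hjR.ne'
            rw [srefl_zero_of_inner h3] at hs
            have hβpos : β ∈ c.pos := by
              rcases hpos with h' | ⟨-, h'⟩
              · exact absurd h1 h'.ne'
              · exact h'
            exact (c.pos_iff β hβR).mp hβpos hs
        rcases hcond with h | ⟨h1, h2⟩
        · -- set B
          left; right
          refine ⟨⟨⟨β, hβR, k, rfl⟩, hpos⟩, hβR, hβα, hν', hip, hk0, ?_⟩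
          show nuu β * k < ⟪α, β⟫ * j
          rw [real_inner_comm]
          linarith
        · -- set C
          right
          refine ⟨β, hβR, hβα, hν', hip, ?_, ?_⟩
          · by_cases hβpos : β ∈ c.pos
            · right
              rw [RootCtx.lamW, Finset.mem_filter]
              exact ⟨hβpos, h2⟩
            · left; exact hβpos
          · refine Prod.ext rfl ?_
            show nuu β * k = ⟪α, β⟫ * j
            rw [real_inner_comm]
            linarith
    · rintro ((⟨hνα, k, hk0, hk2, rfl⟩ | hB) | hC)
      · -- set A
        refine ⟨α, hαR, k, rfl, hνα, ?_, ?_⟩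
        · rcases hk0.lt_or_eq with h | h
          · left
            have : (0:ℝ) < (k:ℝ) := by exact_mod_cast h
            exact mul_pos hν0 this
          · right
            constructor
            · rw [← h]; simp
            · exact hα
        · rcases hk2.lt_or_eq with h | h
          · left
            have : (k:ℝ) < 2 * j := by exact_mod_cast h
            rw [hαα2]
            nlinarith
          · right
            constructor
            · rw [hαα2]
              have : (k:ℝ) = 2 * j := by exact_mod_cast h
              rw [this]; ring
            · rw [srefl_self hαα.ne', neg_neg]
              exact hα
      · -- set B
        obtain ⟨⟨⟨β, hβR, k, rfl⟩, hpos⟩, -, hβα, hν1, hip, h0, hlt⟩ := hB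
        refine ⟨β, hβR, k, rfl, hν1, hpos, Or.inl ?_⟩
        rw [real_inner_comm]
        have : nuu β * k < ⟪α, β⟫ * j := hlt
        linarith [this]
      · -- set C
        obtain ⟨β, hβR, hβα, hνβ, hip, hdisj, rfl⟩ := hC
        obtain ⟨m, hm⟩ := inner_eq_nuu_int c hβR hαR
        refine ⟨β, hβR, m * j, ?_, hνβ, ?_, Or.inr ⟨?_, ?_⟩⟩
        · refine Prod.ext rfl ?_
          show ⟪α, β⟫ * j = nuu β * ((m * j : ℤ) : ℝ)
          rw [hm]; push_cast; ring
        · left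
          show (0:ℝ) < nuu β * ((m * j : ℤ) : ℝ)
          have : (0:ℝ) < ⟪α, β⟫ * j := mul_pos hip hjR
          rw [hm] at this
          push_cast
          push_cast at this
          linarith
        · show nuu β * ((m * j : ℤ) : ℝ) - ⟪β, α⟫ * j = 0
          rw [real_inner_comm α β, hm]
          push_cast
          ring
        · by_cases hβpos : β ∈ c.pos
          · rcases hdisj with h | h
            · exact absurd hβpos h
            · rw [RootCtx.lamW, Finset.mem_filter] at h
              exact h.2
          · exact neg_srefl_pos c hα hβR hβpos hip
  · -- cardinality
    set X : Set (EV n × ℝ) := {p | p.1 ∈ c.pos ∧ p.2 = ⟪α, p.1⟫ * j} with hX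
    set S := c.aLamNu (aRefl (α, nuu α * j)) ν with hS
    set T := c.aLamNu (transl ((j : ℝ) • α)) ν with hT
    have hTeq : T = S \ X := by
      ext q
      rw [hT, hS, Set.mem_diff, mem_aLamNu_transl_iff c hαR j ν q,
        mem_aLamNu_refl_iff c hαR j ν q]
      constructor
      · rintro ⟨β, hβR, k, rfl, hν', hpos, hcond⟩
        rcases hcond with h | ⟨h1, h2⟩
        · refine ⟨⟨β, hβR, k, rfl, hν', hpos, Or.inl h⟩, fun hx => ?_⟩
          have hx2 : nuu β * k = ⟪α, β⟫ * j := hx.2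
          rw [real_inner_comm β α] at hx2
          linarith
        · have hβnp : β ∉ c.pos := fun hp => (c.pos_iff β hβR).mp hp h2
          have hpos' : 0 < nuu β * k := by
            rcases hpos with h | ⟨-, h⟩
            · exact h
            · exact absurd h hβnp
          have hβαpos : 0 < ⟪β, α⟫ := by nlinarith
          have hip : 0 < ⟪α, β⟫ := by rw [real_inner_comm β α]; exact hβαpos
          exact ⟨⟨β, hβR, k, rfl, hν', hpos,
            Or.inr ⟨h1, neg_srefl_pos c hα hβR hβnp hip⟩⟩, fun hx => hβnp hx.1⟩
      · rintro ⟨⟨β, hβR, k, rfl, hν', hpos, hcond⟩, hnx⟩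
        rcases hcond with h | ⟨h1, h2⟩
        · exact ⟨β, hβR, k, rfl, hν', hpos, Or.inl h⟩
        · have hβnp : β ∉ c.pos := by
            intro hp
            apply hnx
            refine ⟨hp, ?_⟩
            show nuu β * k = ⟪α, β⟫ * j
            rw [real_inner_comm β α]
            linarith
          have hβneg : -β ∈ c.pos := by
            by_contra h'
            exact hβnp ((c.pos_iff β hβR).mpr h')
          exact ⟨β, hβR, k, rfl, hν', hpos, Or.inr ⟨h1, hβneg⟩⟩
    have himg : S ∩ X = (fun β => (β, ⟪α, β⟫ * (j:ℝ))) '' ↑(c.lamWnu (srefl α) ν) := by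
      ext q
      simp only [Set.mem_inter_iff, Set.mem_image, Finset.mem_coe]
      constructor
      · rintro ⟨hqS, hqX⟩
        rw [hS, mem_aLamNu_refl_iff c hαR j ν q] at hqS
        obtain ⟨β, hβR, k, rfl, hν', hpos, hcond⟩ := hqS
        obtain ⟨hq1, hq2⟩ := hqX
        have hq2' : nuu β * k = ⟪α, β⟫ * j := hq2
        have h2 : -(srefl α β) ∈ c.pos := by
          rcases hcond with h | ⟨-, h⟩
          · exfalso
            rw [real_inner_comm β α] at hq2'
            linarith
          · exact h
        refine ⟨β, ?_, ?_⟩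
        · rw [RootCtx.lamWnu, Finset.mem_filter, RootCtx.lamW, Finset.mem_filter]
          exact ⟨⟨hq1, h2⟩, hν'⟩
        · exact Prod.ext rfl hq2'.symm
      · rintro ⟨β, hβmem, rfl⟩
        rw [RootCtx.lamWnu, Finset.mem_filter] at hβmem
        obtain ⟨hβlam, hν'⟩ := hβmem
        have hβpos : β ∈ c.pos := (Finset.mem_filter.mp hβlam).1
        have hsneg : -(srefl α β) ∈ c.pos := (Finset.mem_filter.mp hβlam).2
        have hβR := c.pos_subset hβpos
        have hip : 0 < ⟪α, β⟫ := lamW_inner_pos c hα hβlam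
        obtain ⟨m, hm⟩ := inner_eq_nuu_int c hβR hαR
        refine ⟨?_, hβpos, rfl⟩
        rw [hS, mem_aLamNu_refl_iff c hαR j ν _]
        refine ⟨β, hβR, m * j, ?_, hν', Or.inl ?_, Or.inr ⟨?_, hsneg⟩⟩
        · refine Prod.ext rfl ?_
          show ⟪α, β⟫ * j = nuu β * ((m * j : ℤ) : ℝ)
          rw [hm]; push_cast; ring
        · show 0 < nuu β * ((m * j : ℤ) : ℝ)
          have h1 : (0:ℝ) < ⟪α, β⟫ * j := mul_pos hip hjR
          rw [hm] at h1
          push_cast at h1 ⊢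
          linarith
        · show nuu β * ((m * j : ℤ) : ℝ) - ⟪β, α⟫ * j = 0
          rw [real_inner_comm α β, hm]
          push_cast; ring
    have hRne : c.R.Nonempty := ⟨α, hαR⟩
    set K : ℤ := c.R.sup' hRne (fun β => ⌈⟪β, α⟫ * (j:ℝ)⌉) with hK
    have hSsub : S ⊆ (fun q : EV n × ℤ => (q.1, nuu q.1 * q.2)) ''
        ↑(c.R ×ˢ Finset.Icc (0:ℤ) K) := by
      intro q hq
      rw [hS, mem_aLamNu_refl_iff c hαR j ν q] at hq
      obtain ⟨β, hβR, k, rfl, hν', hpos, hcond⟩ := hq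
      have hν1 : 1 ≤ nuu β := one_le_nuu c hβR
      have hνk : (0:ℝ) ≤ nuu β * k := by
        rcases hpos with h | ⟨h, -⟩
        · exact le_of_lt h
        · exact le_of_eq h.symm
      have hk0 : 0 ≤ k := by
        have : (0:ℝ) ≤ (k:ℝ) := nonneg_of_mul_nonneg_right hνk (by linarith)
        exact_mod_cast this
      have hub : nuu β * k ≤ ⟪β, α⟫ * j := by
        rcases hcond with h | ⟨h, -⟩
        · linarith
        · linarith
      have hkK : k ≤ K := by
        have hk0' : (0:ℝ) ≤ (k:ℝ) := by exact_mod_cast hk0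
        have h1 : (k:ℝ) ≤ nuu β * k := by nlinarith
        have h2 : ⟪β, α⟫ * j ≤ ((⌈⟪β, α⟫ * (j:ℝ)⌉ : ℤ) : ℝ) := Int.le_ceil _
        have h3' : ⌈⟪β, α⟫ * (j:ℝ)⌉ ≤ K := by
          rw [hK]
          exact Finset.le_sup' (fun γ => ⌈⟪γ, α⟫ * (j:ℝ)⌉) hβR
        have h3 : ((⌈⟪β, α⟫ * (j:ℝ)⌉ : ℤ) : ℝ) ≤ (K : ℝ) := Int.cast_le.mpr h3'
        have : (k:ℝ) ≤ (K:ℝ) := by linarith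
        exact_mod_cast this
      refine ⟨(β, k), ?_, rfl⟩
      simp only [Finset.coe_product, Set.mem_prod, Finset.mem_coe, Finset.mem_Icc]
      exact ⟨hβR, hk0, hkK⟩
    have hSfin : S.Finite :=
      Set.Finite.subset (Set.Finite.image _ (Finset.finite_toSet _)) hSsub
    have hdisj : Disjoint (S \ X) (S ∩ X) :=
      Set.disjoint_left.mpr fun p hp hq => hp.2 hq.2
    have hfin1 : (S \ X).Finite := hSfin.subset Set.diff_subset
    have hfin2 : (S ∩ X).Finite := hSfin.subset Set.inter_subset_left
    have hinj : Function.Injective (fun β : EV n => (β, ⟪α, β⟫ * (j:ℝ))) := by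
      intro a b h
      simpa using congrArg Prod.fst h
    calc S.ncard = ((S \ X) ∪ (S ∩ X)).ncard := by rw [Set.diff_union_inter]
      _ = (S \ X).ncard + (S ∩ X).ncard := Set.ncard_union_eq hdisj hfin1 hfin2
      _ = T.ncard + (c.lamWnu (srefl α) ν).card := by
          rw [hTeq, himg]
          congr 1
          rw [Set.ncard_image_of_injective _ hinj, Set.ncard_coe_finset]
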